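/- Let E be a field of characteristic 0 and V a finite-dimensional E-vector space regarded with the data (V, W, N₁, ..., N_n, α) as in the definition of Deligne system (W a finite increasing filtration, N_j commuting nilpotents respecting W, α a 𝔾_m-action). Let a_{j,k} ∈ E for 1 ≤ k ≤ j ≤ n with a_{j,j} ≠ 0, and set N'_j = Σ_{k=1}^j a_{j,k} N_k. If for each 1 ≤ j ≤ n the relative monodromy filtration W^{(j)} of N_j with respect to W^{(j-1)} exists (where W^{(0)} = W), then for each j the relative monodromy filtration of N'_j with respect to the filtration W'^{(j-1)} built the same way from the N'_k exists and equals W^{(j)}, i.e., W'^{(j)} = W^{(j)} for all j, provided the Deligne-system conditions (a)–(e) hold for (V, W, N₁,...,N_n, α). -/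

import Mathlib

open Submodule

/-- `W` is a finite increasing filtration on `V`. -/
def IsFinFiltrationZ {E V : Type*} [Field E] [AddCommGroup V] [Module E V]
    (W : ℤ → Submodule E V) : Prop :=
  Monotone W ∧ (∃ a : ℤ, ∀ w ≤ a, W w = ⊥) ∧ (∃ b : ℤ, ∀ w : ℤ, b ≤ w → W w = ⊤)

/-- `W'` is the relative monodromy filtration of `N` with respect to `W`:
`W'` is a finite increasing filtration, `N (W'_w) ⊆ W'_{w-2}`, and for all `w` and `m ≥ 0`
the map induced by `N^m` from `gr^{W'}_{w+m} gr^W_w` to `gr^{W'}_{w-m} gr^W_w` is an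
isomorphism (expressed at the level of subspaces of `V`: the `k`-th piece of the filtration
induced by `W'` on `gr^W_w` is the image of `(W' k ⊓ W w) ⊔ W (w-1)`). -/
def IsRelMonodromy {E V : Type*} [Field E] [AddCommGroup V] [Module E V]
    (N : V →ₗ[E] V) (W W' : ℤ → Submodule E V) : Prop :=
  IsFinFiltrationZ W' ∧
  (∀ w : ℤ, (W' w).map N ≤ W' (w - 2)) ∧
  (∀ (w : ℤ) (m : ℕ),
    -- injectivity of the induced map `N^m : gr^{W'}_{w+m} gr^W_w → gr^{W'}_{w-m} gr^W_w`
    (∀ x ∈ W' (w + (m : ℤ)) ⊓ W w,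
        (N ^ m) x ∈ (W' (w - (m : ℤ) - 1) ⊓ W w) ⊔ W (w - 1) →
        x ∈ (W' (w + (m : ℤ) - 1) ⊓ W w) ⊔ W (w - 1)) ∧
    -- surjectivity of the induced map
    (∀ y ∈ W' (w - (m : ℤ)) ⊓ W w, ∃ x ∈ W' (w + (m : ℤ)) ⊓ W w,
        y - (N ^ m) x ∈ (W' (w - (m : ℤ) - 1) ⊓ W w) ⊔ W (w - 1)))


/-- Triangular change of monodromy operators in a Deligne system (Lemma 2.1.8 of the
paper).  Let `(V, W, N₁, …, N_n, α)` satisfy the conditions (a)–(e) of the definition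
of a Deligne system of `n` variables, with the iterated relative monodromy filtrations
`W^{(0)} = W, W^{(1)}, …, W^{(n)}` (here `Wf j` is `W^{(j)}` and `J` is the grading
given by the `𝔾_m`-action `α`).  Let `a_{j,k} ∈ E` for `1 ≤ k ≤ j ≤ n` with
`a_{j,j} ≠ 0` and `N'_j = Σ_{k=1}^{j} a_{j,k} N_k`.  Then for each `j` the relative
monodromy filtration of `N'_j` with respect to `W'^{(j-1)} = W^{(j-1)}` exists and
equals `W^{(j)}` (by uniqueness of relative monodromy filtrations and induction on
`j`, this is exactly the assertion that `W^{(j)}` is the relative monodromy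
filtration of `N'_j` with respect to `W^{(j-1)}`). -/
theorem deligne_system_triangular_change
    {E V : Type*} [Field E] [CharZero E] [AddCommGroup V] [Module E V]
    [FiniteDimensional E V] (n : ℕ)
    (N : ℕ → (V →ₗ[E] V)) (Wf : ℕ → (ℤ → Submodule E V)) (J : ℤ → Submodule E V)
    (hW : IsFinFiltrationZ (Wf 0))
    -- (a) the `N_j` are nilpotent, mutually commuting, and respect `W`
    (hnil : ∀ j, 1 ≤ j → j ≤ n → IsNilpotent (N j))
    (hcomm : ∀ j k, 1 ≤ j → j ≤ n → 1 ≤ k → k ≤ n → N j ∘ₗ N k = N k ∘ₗ N j)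
    (hresp : ∀ j, 1 ≤ j → j ≤ n → ∀ w : ℤ, ((Wf 0) w).map (N j) ≤ (Wf 0) w)
    -- (b) the iterated relative monodromy filtrations exist
    (hb : ∀ j, 1 ≤ j → j ≤ n → IsRelMonodromy (N j) (Wf (j - 1)) (Wf j))
    -- (c) compatibility with restriction to `U = W^{(k)}_w` for `k < j - 1`
    (hc : ∀ j k, 1 ≤ j → j ≤ n → k + 1 < j → ∀ w : ℤ,
      ∀ hU : ∀ x ∈ Wf k w, N j x ∈ Wf k w,
        IsRelMonodromy ((N j).restrict hU)
          (fun v : ℤ => ((Wf (j - 1)) v).comap ((Wf k) w).subtype)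
          (fun v : ℤ => ((Wf j) v).comap ((Wf k) w).subtype))
    -- (d) `N_j (W^{(k)}_w) ⊆ W^{(k)}_w`, and `N_j (W^{(k)}_w) ⊆ W^{(k)}_{w-2}` if `k ≥ j`
    (hd : ∀ j k, 1 ≤ j → j ≤ n → k ≤ n → ∀ w : ℤ,
      ((Wf k) w).map (N j) ≤ (Wf k) w ∧ (j ≤ k → ((Wf k) w).map (N j) ≤ (Wf k) (w - 2)))
    -- (e) the `𝔾_m`-action `α`: a grading `J` splitting `W^{(n)}`, stabilizing each
    -- `W^{(j)}_w` for `j < n`, with each `N_j` of weight `-2`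
    (hJ : DirectSum.IsInternal J)
    (hJsplit : ∀ w : ℤ, (Wf n) w = ⨆ k : ℤ, ⨆ _ : k ≤ w, J k)
    (hJstab : ∀ j, j < n → ∀ w : ℤ, (Wf j) w = ⨆ k : ℤ, ((Wf j) w ⊓ J k))
    (hJN : ∀ j, 1 ≤ j → j ≤ n → ∀ k : ℤ, (J k).map (N j) ≤ J (k - 2))
    -- the triangular change of operators
    (a : ℕ → ℕ → E) (ha : ∀ j, 1 ≤ j → j ≤ n → a j j ≠ 0) :
    ∀ j, 1 ≤ j → j ≤ n →
      IsRelMonodromy (∑ k ∈ Finset.Icc 1 j, a j k • N k) (Wf (j - 1)) (Wf j) := by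

  intro j hj1 hjn
  obtain ⟨hW'filt, hW'shift, hW'iso⟩ := hb j hj1 hjn
  have hWfilt : IsFinFiltrationZ (Wf (j - 1)) := by
    rcases Nat.eq_or_lt_of_le hj1 with h | h
    · rw [← h]; exact hW
    · have := (hb (j - 1) (by omega) (by omega)).1
      exact this
  have hWmono : Monotone (Wf (j - 1)) := hWfilt.1
  set c := a j j with hc0
  have hcne : c ≠ 0 := ha j hj1 hjn
  set N' : V →ₗ[E] V := ∑ k ∈ Finset.Icc 1 j, a j k • N k with hN'def
  -- preservation of W^{(j-1)} by each N k, k ≤ j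
  have hpres : ∀ k, 1 ≤ k → k ≤ j → ∀ w : ℤ, ∀ x ∈ Wf (j - 1) w,
      N k x ∈ Wf (j - 1) w := fun k hk1 hkj w x hx =>
    (hd k (j - 1) hk1 (hkj.trans hjn) (by omega) w).1 (Submodule.mem_map_of_mem hx)
  have hdrop : ∀ k, 1 ≤ k → k ≤ j - 1 → ∀ w : ℤ, ∀ x ∈ Wf (j - 1) w,
      N k x ∈ Wf (j - 1) (w - 2) := fun k hk1 hkj w x hx =>
    (hd k (j - 1) hk1 (by omega) (by omega) w).2 hkj (Submodule.mem_map_of_mem hx)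
  -- splitting of the sum
  have hins : Finset.Icc 1 j = insert j (Finset.Icc 1 (j - 1)) := by
    ext t; simp only [Finset.mem_Icc, Finset.mem_insert]; omega
  have hnotmem : j ∉ Finset.Icc 1 (j - 1) := by
    simp only [Finset.mem_Icc]; omega
  have hsplit : N' = (∑ k ∈ Finset.Icc 1 (j - 1), a j k • N k) + c • N j := by
    rw [hN'def, hins, Finset.sum_insert hnotmem, add_comm]
  -- the "lower" part drops the filtration by 2
  have hdiff : ∀ w : ℤ, ∀ x ∈ Wf (j - 1) w,
      N' x - c • N j x ∈ Wf (j - 1) (w - 2) := by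
    intro w x hx
    have : N' x - c • N j x = (∑ k ∈ Finset.Icc 1 (j - 1), a j k • N k) x := by
      rw [hsplit]; simp [LinearMap.add_apply]
    rw [this, LinearMap.sum_apply]
    refine Submodule.sum_mem _ fun k hk => ?_
    simp only [Finset.mem_Icc] at hk
    exact Submodule.smul_mem _ _ (hdrop k hk.1 hk.2 w x hx)
  have hN'pres : ∀ w : ℤ, ∀ x ∈ Wf (j - 1) w, N' x ∈ Wf (j - 1) w := by
    intro w x hx
    have h1 := hdiff w x hx
    have h2 : c • N j x ∈ Wf (j - 1) w :=
      Submodule.smul_mem _ _ (hpres j hj1 le_rfl w x hx)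
    have : N' x = (N' x - c • N j x) + c • N j x := by abel
    rw [this]
    exact Submodule.add_mem _ (hWmono (by omega) h1) h2
  have hNjpowpres : ∀ m : ℕ, ∀ w : ℤ, ∀ x ∈ Wf (j - 1) w,
      (N j ^ m) x ∈ Wf (j - 1) w := by
    intro m
    induction m with
    | zero => intro w x hx; simpa using hx
    | succ m ih =>
      intro w x hx
      rw [pow_succ, Module.End.mul_apply]
      exact ih w _ (hpres j hj1 le_rfl w x hx)
  -- key estimate: N'^m agrees with c^m • N_j^m modulo W_{w-1}
  have hpow : ∀ m : ℕ, ∀ w : ℤ, ∀ x ∈ Wf (j - 1) w,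
      (N' ^ m) x - c ^ m • (N j ^ m) x ∈ Wf (j - 1) (w - 1) := by
    intro m
    induction m with
    | zero =>
      intro w x hx
      simp
    | succ m ih =>
      intro w x hx
      have hx' : N' x ∈ Wf (j - 1) w := hN'pres w x hx
      have h1 : (N' ^ m) (N' x) - c ^ m • (N j ^ m) (N' x) ∈ Wf (j - 1) (w - 1) :=
        ih w _ hx'
      have h2 : N' x - c • N j x ∈ Wf (j - 1) (w - 2) := hdiff w x hx
      have h3 : (N j ^ m) (N' x - c • N j x) ∈ Wf (j - 1) (w - 2) :=
        hNjpowpres m _ _ h2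
      have h4 : c ^ m • (N j ^ m) (N' x - c • N j x) ∈ Wf (j - 1) (w - 1) :=
        hWmono (by omega) (Submodule.smul_mem _ _ h3)
      have heq : (N' ^ (m + 1)) x - c ^ (m + 1) • (N j ^ (m + 1)) x =
          ((N' ^ m) (N' x) - c ^ m • (N j ^ m) (N' x)) +
            c ^ m • (N j ^ m) (N' x - c • N j x) := by
        rw [pow_succ N', pow_succ (N j), Module.End.mul_apply, Module.End.mul_apply,
          map_sub, map_smul, smul_sub, smul_smul, ← pow_succ]
        abel
      rw [heq]
      exact Submodule.add_mem _ h1 h4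
  refine ⟨hW'filt, ?_, ?_⟩
  · -- N' shifts W^{(j)} by 2
    intro w
    rintro y ⟨x, hx, rfl⟩
    rw [hN'def, LinearMap.sum_apply]
    refine Submodule.sum_mem _ fun k hk => ?_
    simp only [Finset.mem_Icc] at hk
    exact Submodule.smul_mem _ _
      ((hd k j hk.1 (hk.2.trans hjn) hjn w).2 hk.2 (Submodule.mem_map_of_mem hx))
  · intro w m
    have hcm : c ^ m ≠ 0 := pow_ne_zero m hcne
    constructor
    · intro x hx hmem
      have hxW : x ∈ Wf (j - 1) w := hx.2
      have h1 : (N' ^ m) x - c ^ m • (N j ^ m) x ∈ Wf (j - 1) (w - 1) :=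
        hpow m w x hxW
      have h2 : c ^ m • (N j ^ m) x ∈
          (Wf j (w - (m : ℤ) - 1) ⊓ Wf (j - 1) w) ⊔ Wf (j - 1) (w - 1) := by
        have : c ^ m • (N j ^ m) x =
            (N' ^ m) x - ((N' ^ m) x - c ^ m • (N j ^ m) x) := by abel
        rw [this]
        exact Submodule.sub_mem _ hmem (Submodule.mem_sup_right h1)
      have h3 : (N j ^ m) x ∈
          (Wf j (w - (m : ℤ) - 1) ⊓ Wf (j - 1) w) ⊔ Wf (j - 1) (w - 1) := by
        have := Submodule.smul_mem _ (c ^ m)⁻¹ h2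
        rwa [inv_smul_smul₀ hcm] at this
      exact (hW'iso w m).1 x hx h3
    · intro y hy
      obtain ⟨x, hx, hsub⟩ := (hW'iso w m).2 y hy
      refine ⟨(c ^ m)⁻¹ • x, Submodule.smul_mem _ _ hx, ?_⟩
      have h1 : (N' ^ m) x - c ^ m • (N j ^ m) x ∈ Wf (j - 1) (w - 1) :=
        hpow m w x hx.2
      have heq : y - (N' ^ m) ((c ^ m)⁻¹ • x) =
          (y - (N j ^ m) x) - (c ^ m)⁻¹ • ((N' ^ m) x - c ^ m • (N j ^ m) x) := by
        rw [map_smul, smul_sub, smul_smul, inv_mul_cancel₀ hcm, one_smul]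
        abel
      rw [heq]
      exact Submodule.sub_mem _ hsub
        (Submodule.mem_sup_right (Submodule.smul_mem _ _ h1))
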